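/- arXiv:1503.02339 — 4 statements merged into one kernel-verified Lean document; each statement's English description precedes it below -/
import Mathlib

section
/- Let A be a complex M×N matrix, y ∈ ℂ^M, and μ > 0. Then the LASSO objective L(x) = ‖y − A x‖₂² + μ‖x‖₁ attains its global minimum, i.e., there exists x̂ ∈ ℂ^N with L(x̂) ≤ L(x) for all x ∈ ℂ^N. -/
open Matrix

/-- The LASSO objective ‖y − A x‖₂² + μ‖x‖₁. -/
noncomputable def lassoObj {M N : ℕ} (A : Matrix (Fin M) (Fin N) ℂ) (y : Fin M → ℂ) (μ : ℝ)
    (x : Fin N → ℂ) : ℝ :=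
  ∑ i, ‖(y - A.mulVec x) i‖ ^ 2 + μ * ∑ i, ‖x i‖

lemma lasso_cont {M N : ℕ} (A : Matrix (Fin M) (Fin N) ℂ) (y : Fin M → ℂ) (μ : ℝ) :
    Continuous fun x : Fin N → ℂ => lassoObj A y μ x := by
  unfold lassoObj Matrix.mulVec dotProduct
  fun_prop

lemma lasso_lb {M N : ℕ} (A : Matrix (Fin M) (Fin N) ℂ) (y : Fin M → ℂ) {μ : ℝ}
    (hμ : 0 ≤ μ) (x : Fin N → ℂ) : μ * ‖x‖ ≤ lassoObj A y μ x := by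
  have h1 : (0:ℝ) ≤ ∑ i, ‖(y - A.mulVec x) i‖ ^ 2 :=
    Finset.sum_nonneg fun i _ => by positivity
  have h2 : ‖x‖ ≤ ∑ i, ‖x i‖ := by
    rcases isEmpty_or_nonempty (Fin N) with h | h
    · have : ‖x‖ = 0 := by
        rw [norm_eq_zero]; ext i; exact absurd trivial (h.elim i)
      simp [this]
    · rw [pi_norm_le_iff_of_nonneg (Finset.sum_nonneg fun i _ => norm_nonneg _)]
      intro i
      exact Finset.single_le_sum (f := fun i => ‖x i‖) (fun j _ => norm_nonneg _) (Finset.mem_univ i)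
  unfold lassoObj
  nlinarith [mul_le_mul_of_nonneg_left h2 hμ]

theorem lasso_exists_minimizer {M N : ℕ} (A : Matrix (Fin M) (Fin N) ℂ) (y : Fin M → ℂ)
    (μ : ℝ) (hμ : 0 < μ) :
    ∃ xhat : Fin N → ℂ, ∀ x : Fin N → ℂ, lassoObj A y μ xhat ≤ lassoObj A y μ x := by
  set L0 := lassoObj A y μ 0 with hL0
  have hL0nn : 0 ≤ L0 := le_trans (by positivity) (lasso_lb A y hμ.le 0)
  set R := L0 / μ with hR
  have hRnn : 0 ≤ R := div_nonneg hL0nn hμ.le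
  obtain ⟨xhat, hxmem, hxmin⟩ := (isCompact_closedBall (0 : Fin N → ℂ) R).exists_isMinOn
    ⟨0, Metric.mem_closedBall_self hRnn⟩ ((lasso_cont A y μ).continuousOn)
  refine ⟨xhat, fun x => ?_⟩
  by_cases hx : x ∈ Metric.closedBall (0 : Fin N → ℂ) R
  · exact hxmin hx
  · have h0 : lassoObj A y μ xhat ≤ L0 := hxmin (Metric.mem_closedBall_self hRnn)
    have hxn : R < ‖x‖ := by
      simpa [dist_zero_right] using (Metric.mem_closedBall.not.mp hx)
    have : L0 < μ * ‖x‖ := by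
      rw [hR] at hxn
      calc L0 = μ * (L0 / μ) := by field_simp
        _ < μ * ‖x‖ := by exact mul_lt_mul_of_pos_left hxn hμ
    exact le_trans h0 (le_trans this.le (lasso_lb A y hμ.le x))
end

section
/- Let A be a complex M×N matrix, y ∈ ℂ^M, and μ > 0. A vector x̂ ∈ ℂ^N is a global minimizer of the LASSO objective L(x) = ‖y − A x‖₂² + μ‖x‖₁ if and only if the beamformed residual r = 2·Aᴴ(y − A x̂) ∈ ℂ^N satisfies: for every index i, if x̂ᵢ ≠ 0 then rᵢ = μ·x̂ᵢ/|x̂ᵢ|, and if x̂ᵢ = 0 then |rᵢ| ≤ μ. -/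
open Matrix

/-- The beamformed residual `r = 2 Aᴴ (y − A x̂)`. -/
noncomputable def beamRes {M N : ℕ} (A : Matrix (Fin M) (Fin N) ℂ) (y : Fin M → ℂ)
    (xhat : Fin N → ℂ) : Fin N → ℂ :=
  (2 : ℂ) • Aᴴ.mulVec (y - A.mulVec xhat)

open Finset

private lemma nsub_sq (z w : ℂ) : ‖z - w‖^2 = ‖z‖^2 + ‖w‖^2 - 2*((starRingEnd ℂ) w * z).re := by
  simp [Complex.sq_norm, Complex.normSq_apply, Complex.mul_re,
    Complex.sub_re, Complex.sub_im]; ring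

private lemma nadd_sq (z w : ℂ) : ‖z + w‖^2 = ‖z‖^2 + ‖w‖^2 + 2*((starRingEnd ℂ) w * z).re := by
  have := nsub_sq z (-w)
  simp only [sub_neg_eq_add, map_neg, neg_mul, Complex.neg_re, norm_neg] at this
  linarith

private lemma abs_re_mul (w z : ℂ) : |((starRingEnd ℂ) w * z).re| ≤ ‖w‖ * ‖z‖ := by
  calc |((starRingEnd ℂ) w * z).re| ≤ ‖(starRingEnd ℂ) w * z‖ := Complex.abs_re_le_norm _
  _ = ‖w‖ * ‖z‖ := by rw [norm_mul]; simp

private lemma conj_mul_self_re (d : ℂ) : ((starRingEnd ℂ) d * d).re = ‖d‖^2 := by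
  simp [Complex.sq_norm, Complex.normSq_apply, Complex.mul_re]

private lemma taylor' (z w : ℂ) :
    2*‖z‖*‖z+w‖ ≤ 2*‖z‖^2 + ‖w‖^2 + 2*((starRingEnd ℂ) w * z).re := by
  nlinarith [nadd_sq z w, sq_nonneg (‖z‖ - ‖z+w‖)]

private lemma scalar_zero (C μ : ℝ) (hC : 0 ≤ C) (hμ : 0 < μ) (r : ℂ)
    (h : ∀ w : ℂ, 0 ≤ ‖w‖^2*C - ((starRingEnd ℂ) w * r).re + μ*‖w‖) : ‖r‖ ≤ μ := by
  by_contra hlt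
  push_neg at hlt
  have hr0 : 0 < ‖r‖ := lt_trans hμ hlt
  set t : ℝ := (‖r‖ - μ)/(2*‖r‖*C + 1) with htdef
  have htpos : 0 < t := by apply div_pos <;> nlinarith
  have ht : t*(2*‖r‖*C + 1) = ‖r‖ - μ := by
    rw [htdef]; exact div_mul_cancel₀ _ (by positivity)
  have H := h ((t:ℂ)*r)
  have hn : ‖(t:ℂ)*r‖ = t*‖r‖ := by
    rw [norm_mul, Complex.norm_real, Real.norm_eq_abs, abs_of_pos htpos]
  have hre : ((starRingEnd ℂ) ((t:ℂ)*r) * r).re = t*‖r‖^2 := by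
    rw [_root_.map_mul, Complex.conj_ofReal, mul_assoc, Complex.re_ofReal_mul, conj_mul_self_re]
  rw [hn, hre] at H
  have key : ‖r‖ - μ ≤ t*‖r‖*C := by nlinarith [mul_pos htpos hr0]
  nlinarith [mul_nonneg (mul_nonneg htpos.le hr0.le) hC]

private lemma scalar_ne (C μ : ℝ) (hC : 0 ≤ C) (hμ : 0 < μ) (z r : ℂ) (hz : z ≠ 0)
    (h : ∀ w : ℂ, 0 ≤ ‖w‖^2*C - ((starRingEnd ℂ) w * r).re + μ*(‖z+w‖-‖z‖)) :
    r = (μ:ℂ)*z/(‖z‖:ℂ) := by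
  set a : ℝ := ‖z‖ with hadef
  have ha : 0 < a := norm_pos_iff.mpr hz
  set d : ℂ := (a:ℂ)*r - (μ:ℂ)*z with hddef
  have hsuff : d = 0 → r = (μ:ℂ)*z/(‖z‖:ℂ) := by
    intro h0
    have h1 : (a:ℂ) ≠ 0 := by exact_mod_cast ha.ne'
    have h2 : (a:ℂ)*r = (μ:ℂ)*z := by linear_combination h0
    rw [← hadef]
    field_simp
    linear_combination h2
  apply hsuff
  by_contra hd0
  have hdn : 0 < ‖d‖ := norm_pos_iff.mpr hd0
  set t : ℝ := 1/(2*a*C + μ + 1) with htdef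
  have ht0 : 0 < t := by positivity
  have htK : t*(2*a*C + μ) < 1 := by
    rw [htdef]
    rw [div_mul_eq_mul_div, div_lt_one (by positivity)]
    linarith
  have H := h ((t:ℂ)*d)
  have hn : ‖(t:ℂ)*d‖ = t*‖d‖ := by
    rw [norm_mul, Complex.norm_real, Real.norm_eq_abs, abs_of_pos ht0]
  have hT := taylor' z ((t:ℂ)*d)
  rw [← hadef] at hT
  have hre1 : ((starRingEnd ℂ) ((t:ℂ)*d) * r).re = t*((starRingEnd ℂ) d * r).re := by
    rw [_root_.map_mul, Complex.conj_ofReal, mul_assoc, Complex.re_ofReal_mul]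
  have hre2 : ((starRingEnd ℂ) ((t:ℂ)*d) * z).re = t*((starRingEnd ℂ) d * z).re := by
    rw [_root_.map_mul, Complex.conj_ofReal, mul_assoc, Complex.re_ofReal_mul]
  have hqp : a*((starRingEnd ℂ) d * r).re - μ*((starRingEnd ℂ) d * z).re = ‖d‖^2 := by
    have heq : (a:ℂ)*((starRingEnd ℂ) d * r) - (μ:ℂ)*((starRingEnd ℂ) d * z)
        = (starRingEnd ℂ) d * d := by rw [hddef]; ring
    have hre := congrArg Complex.re heq
    simp only [Complex.sub_re, Complex.re_ofReal_mul] at hre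
    rw [hre, conj_mul_self_re]
  rw [hn, hre1] at H
  rw [hn, hre2] at hT
  clear hsuff h hre1 hre2 htdef
  clear hddef hadef
  clear_value t d a
  nlinarith [mul_le_mul_of_nonneg_left H (by positivity : (0:ℝ) ≤ 2*a),
    mul_pos (sub_pos.mpr htK) (mul_pos ht0 (mul_pos hdn hdn)), hqp, hT, hμ.le]

private lemma sum_conj_mul {M N : ℕ} (A : Matrix (Fin M) (Fin N) ℂ) (y : Fin M → ℂ)
    (xhat : Fin N → ℂ) (h : Fin N → ℂ) :
    ∑ i, (starRingEnd ℂ) (h i) * beamRes A y xhat i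
      = 2 * ∑ j, (starRingEnd ℂ) (A.mulVec h j) * (y - A.mulVec xhat) j := by
  unfold beamRes
  simp only [Pi.smul_apply, smul_eq_mul, Matrix.mulVec, dotProduct,
    Matrix.conjTranspose_apply, Finset.mul_sum, Finset.sum_mul, map_sum, _root_.map_mul]
  rw [Finset.sum_comm]
  exact Finset.sum_congr rfl fun j _ => Finset.sum_congr rfl fun i _ => by
    simp only [starRingEnd_apply]; ring

private lemma quad_id {M N : ℕ} (A : Matrix (Fin M) (Fin N) ℂ) (y : Fin M → ℂ)
    (xhat x : Fin N → ℂ) :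
    ∑ j, ‖(y - A.mulVec x) j‖^2
      = ∑ j, ‖(y - A.mulVec xhat) j‖^2 + ∑ j, ‖A.mulVec (x - xhat) j‖^2
        - (∑ i, (starRingEnd ℂ) ((x - xhat) i) * beamRes A y xhat i).re := by
  have hsplit : y - A.mulVec x = (y - A.mulVec xhat) - A.mulVec (x - xhat) := by
    rw [Matrix.mulVec_sub]; abel
  rw [hsplit]
  have h1 : ∀ j, ‖((y - A.mulVec xhat) - A.mulVec (x - xhat)) j‖^2
      = ‖(y - A.mulVec xhat) j‖^2 + ‖A.mulVec (x - xhat) j‖^2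
        - 2*((starRingEnd ℂ) (A.mulVec (x - xhat) j) * (y - A.mulVec xhat) j).re := by
    intro j; exact nsub_sq _ _
  have h2 : (∑ i, (starRingEnd ℂ) ((x - xhat) i) * beamRes A y xhat i).re
      = 2 * ∑ j, ((starRingEnd ℂ) (A.mulVec (x - xhat) j) * (y - A.mulVec xhat) j).re := by
    rw [sum_conj_mul A y xhat (x - xhat), Complex.mul_re]
    simp [Complex.re_sum]
  rw [h2]
  simp only [h1]
  rw [Finset.sum_sub_distrib, Finset.sum_add_distrib, ← Finset.mul_sum]

private lemma perturb {M N : ℕ} (A : Matrix (Fin M) (Fin N) ℂ) (y : Fin M → ℂ) (μ : ℝ)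
    (xhat : Fin N → ℂ)
    (hmin : ∀ x, lassoObj A y μ xhat ≤ lassoObj A y μ x) (i : Fin N) (w : ℂ) :
    0 ≤ ‖w‖^2 * (∑ j, ‖A j i‖^2) - ((starRingEnd ℂ) w * beamRes A y xhat i).re
        + μ * (‖xhat i + w‖ - ‖xhat i‖) := by
  have h := hmin (xhat + Pi.single i w)
  unfold lassoObj at h
  have hq := quad_id A y xhat (xhat + Pi.single i w)
  have hd : xhat + Pi.single i w - xhat = Pi.single i w := by abel
  rw [hd] at hq
  have hmv : ∀ j, A.mulVec (Pi.single i w) j = A j i * w := by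
    intro j; simp [Matrix.mulVec, dotProduct_single]
  have e1 : ∑ j, ‖A.mulVec (Pi.single i w) j‖^2 = ‖w‖^2 * ∑ j, ‖A j i‖^2 := by
    simp only [hmv, norm_mul, mul_pow]
    rw [Finset.mul_sum]
    exact Finset.sum_congr rfl fun j _ => by ring
  have e2 : ∑ i', (starRingEnd ℂ) ((Pi.single i w : Fin N → ℂ) i') * beamRes A y xhat i'
      = (starRingEnd ℂ) w * beamRes A y xhat i := by
    rw [Finset.sum_eq_single_of_mem i (Finset.mem_univ i)]
    · simp
    · intro b _ hb; simp [Pi.single_eq_of_ne hb]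
  have e3 : ∑ j, ‖(xhat + Pi.single i w : Fin N → ℂ) j‖
      = (∑ j, ‖xhat j‖) - ‖xhat i‖ + ‖xhat i + w‖ := by
    have s1 : ∑ j, ‖(xhat + Pi.single i w : Fin N → ℂ) j‖
        = ‖xhat i + w‖ + ∑ j ∈ univ.erase i, ‖(xhat + Pi.single i w : Fin N → ℂ) j‖ := by
      have hi : ‖(xhat + Pi.single i w : Fin N → ℂ) i‖ = ‖xhat i + w‖ := by simp
      rw [← hi]
      exact (Finset.add_sum_erase univ _ (Finset.mem_univ i)).symm
    have s2 : ∑ j ∈ univ.erase i, ‖(xhat + Pi.single i w : Fin N → ℂ) j‖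
        = ∑ j ∈ univ.erase i, ‖xhat j‖ := by
      refine Finset.sum_congr rfl fun j hj => ?_
      have : j ≠ i := Finset.ne_of_mem_erase hj
      simp [Pi.single_eq_of_ne this]
    have s3 : ∑ j, ‖xhat j‖ = ‖xhat i‖ + ∑ j ∈ univ.erase i, ‖xhat j‖ :=
      (Finset.add_sum_erase univ _ (Finset.mem_univ i)).symm
    rw [s1, s2]; linarith
  rw [e1, e2] at hq
  rw [e3] at h
  linarith [h, hq]

private lemma bracket_le {μ : ℝ} (hμ : 0 < μ) (xi z ri : ℂ)
    (h1 : z ≠ 0 → ri = (μ:ℂ)*z/(‖z‖:ℂ)) (h2 : z = 0 → ‖ri‖ ≤ μ) :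
    ((starRingEnd ℂ) (xi - z) * ri).re ≤ μ*‖xi‖ - μ*‖z‖ := by
  by_cases hz : z = 0
  · subst hz
    have hri := h2 rfl
    have habs := abs_re_mul (xi - 0) ri
    have h3 : ‖xi - 0‖ * ‖ri‖ ≤ ‖xi‖ * μ := by
      rw [sub_zero]
      exact mul_le_mul_of_nonneg_left hri (norm_nonneg xi)
    simp only [norm_zero]
    nlinarith [abs_le.mp habs]
  · have hri := h1 hz
    have ha : 0 < ‖z‖ := norm_pos_iff.mpr hz
    have hr' : ri = ((μ/‖z‖ : ℝ):ℂ)*z := by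
      rw [hri, Complex.ofReal_div]; ring
    have hnr : ‖ri‖ = μ := by
      rw [hr', norm_mul, Complex.norm_real, Real.norm_eq_abs,
        abs_of_pos (div_pos hμ ha), div_mul_cancel₀ _ ha.ne']
    have hzr : ((starRingEnd ℂ) z * ri).re = μ*‖z‖ := by
      rw [hr', show (starRingEnd ℂ) z * (((μ/‖z‖ : ℝ):ℂ)*z)
          = ((μ/‖z‖ : ℝ):ℂ) * ((starRingEnd ℂ) z * z) by ring,
        Complex.re_ofReal_mul, conj_mul_self_re, sq, ← mul_assoc,
        div_mul_cancel₀ _ ha.ne']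
    have hxr : ((starRingEnd ℂ) xi * ri).re ≤ μ*‖xi‖ := by
      have := abs_re_mul xi ri
      rw [hnr] at this
      nlinarith [abs_le.mp this]
    have hsplit : ((starRingEnd ℂ) (xi - z) * ri).re
        = ((starRingEnd ℂ) xi * ri).re - ((starRingEnd ℂ) z * ri).re := by
      rw [map_sub, sub_mul, Complex.sub_re]
    rw [hsplit, hzr]
    linarith

/-- Global optimality condition for the LASSO: `x̂` is a global minimizer iff the
beamformed residual satisfies `rᵢ = μ x̂ᵢ/|x̂ᵢ|` on the support of `x̂` and `|rᵢ| ≤ μ`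
off the support. -/
theorem lasso_optimality_iff {M N : ℕ} (A : Matrix (Fin M) (Fin N) ℂ) (y : Fin M → ℂ)
    (μ : ℝ) (hμ : 0 < μ) (xhat : Fin N → ℂ) :
    (∀ x : Fin N → ℂ, lassoObj A y μ xhat ≤ lassoObj A y μ x) ↔
      (∀ i : Fin N,
        (xhat i ≠ 0 → beamRes A y xhat i = (μ : ℂ) * xhat i / (‖xhat i‖ : ℂ)) ∧
        (xhat i = 0 → ‖beamRes A y xhat i‖ ≤ μ)) := by
  constructor
  · intro hmin i
    have hC : (0:ℝ) ≤ ∑ j, ‖A j i‖^2 := by positivity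
    constructor
    · intro hne
      exact scalar_ne _ μ hC hμ (xhat i) (beamRes A y xhat i) hne
        (fun w => perturb A y μ xhat hmin i w)
    · intro h0
      apply scalar_zero _ μ hC hμ
      intro w
      have hp := perturb A y μ xhat hmin i w
      rw [h0] at hp
      simpa using hp
  · intro hcond x
    have hq := quad_id A y xhat x
    unfold lassoObj
    have hb : ∀ i, ((starRingEnd ℂ) ((x - xhat) i) * beamRes A y xhat i).re
        ≤ μ*‖x i‖ - μ*‖xhat i‖ := by
      intro i
      have := bracket_le hμ (x i) (xhat i) (beamRes A y xhat i) (hcond i).1 (hcond i).2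
      simpa [Pi.sub_apply] using this
    have hsum : (∑ i, (starRingEnd ℂ) ((x - xhat) i) * beamRes A y xhat i).re
        ≤ μ*(∑ i, ‖x i‖) - μ*(∑ i, ‖xhat i‖) := by
      rw [Complex.re_sum]
      calc ∑ i, ((starRingEnd ℂ) ((x - xhat) i) * beamRes A y xhat i).re
          ≤ ∑ i, (μ*‖x i‖ - μ*‖xhat i‖) := Finset.sum_le_sum fun i _ => hb i
        _ = μ*(∑ i, ‖x i‖) - μ*(∑ i, ‖xhat i‖) := by
            rw [Finset.sum_sub_distrib, Finset.mul_sum, Finset.mul_sum]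
    have hAh : (0:ℝ) ≤ ∑ j, ‖A.mulVec (x - xhat) j‖^2 := by positivity
    linarith [hq, hsum, hAh]
end

section
/- Let A be a complex M×N matrix, y ∈ ℂ^M, and μ > 0. If x̂ ∈ ℂ^N is a global minimizer of the LASSO objective L(x) = ‖y − A x‖₂² + μ‖x‖₁, then with r = 2·Aᴴ(y − A x̂) one has Σᵢ conj(x̂ᵢ)·rᵢ = μ‖x̂‖₁ (an equality of complex numbers, the right-hand side being real). -/
open Matrix

private lemma eps_le_aux (a K : ℝ) (hK : 0 ≤ K) (h : ∀ ε : ℝ, 0 < ε → ε ≤ 1 → a ≤ ε * K) :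
    a ≤ 0 := by
  by_contra hc
  push_neg at hc
  set ε := min 1 (a / (2 * (K + 1))) with hε
  have hε0 : 0 < ε := lt_min one_pos (by positivity)
  have h2 := h ε hε0 (min_le_left _ _)
  have hle : ε ≤ a / (2 * (K + 1)) := min_le_right _ _
  have h3 : ε * K ≤ a / (2 * (K + 1)) * K := mul_le_mul_of_nonneg_right hle hK
  have h4 : a / (2 * (K + 1)) * K ≤ a / 2 := by
    rw [div_mul_eq_mul_div, div_le_div_iff₀ (by positivity) (by norm_num)]
    nlinarith
  linarith

private lemma conj_smul_re (ε : ℝ) (u w : ℂ) :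
    ((starRingEnd ℂ) ((ε : ℂ) * u) * w).re = ε * ((starRingEnd ℂ) u * w).re := by
  simp [Complex.mul_re, Complex.conj_re, Complex.conj_im]
  ring


set_option maxHeartbeats 2000000 in
/-- At a global LASSO minimizer, `Σᵢ conj(x̂ᵢ) rᵢ = μ ‖x̂‖₁`. -/
theorem lasso_residual_inner {M N : ℕ} (A : Matrix (Fin M) (Fin N) ℂ) (y : Fin M → ℂ)
    (μ : ℝ) (hμ : 0 < μ) (xhat : Fin N → ℂ)
    (hmin : ∀ x : Fin N → ℂ, lassoObj A y μ xhat ≤ lassoObj A y μ x) :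
    ∑ i, (starRingEnd ℂ) (xhat i) * beamRes A y xhat i
      = ((μ * ∑ i, ‖xhat i‖ : ℝ) : ℂ) := by
  set v : Fin M → ℂ := A.mulVec xhat with hv
  set r₀ : Fin M → ℂ := y - A.mulVec xhat with hr₀
  set S : ℝ := ∑ i, ‖xhat i‖ with hS
  set V : ℝ := ∑ i, Complex.normSq (v i) with hV
  set z : ℂ := ∑ j, (starRingEnd ℂ) (v j) * r₀ j with hz
  have hS0 : 0 ≤ S := Finset.sum_nonneg fun i _ => norm_nonneg _
  have hV0 : 0 ≤ V := Finset.sum_nonneg fun i _ => Complex.normSq_nonneg _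
  -- Step A : the LHS equals 2 * z
  have hLHS : ∑ i, (starRingEnd ℂ) (xhat i) * beamRes A y xhat i = 2 * z := by
    simp only [beamRes, Pi.smul_apply, smul_eq_mul, Matrix.mulVec, dotProduct,
      Matrix.conjTranspose_apply, hz, ← hr₀]
    simp only [Finset.mul_sum]
    rw [Finset.sum_comm]
    refine Finset.sum_congr rfl fun j _ => ?_
    simp only [hv, Matrix.mulVec, dotProduct, map_sum, Finset.mul_sum, Finset.sum_mul]
    refine Finset.sum_congr rfl fun i _ => ?_
    simp only [_root_.map_mul, Complex.star_def]
    ring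
  -- Step B : the key inequality from minimality along x = (1+c) • xhat
  have key : ∀ c : ℂ, 0 ≤ Complex.normSq c * V - 2 * ((starRingEnd ℂ) c * z).re
      + μ * ((‖1 + c‖ - 1) * S) := by
    intro c
    have h1 := hmin ((1 + c) • xhat)
    have e1 : A.mulVec ((1 + c) • xhat) = (1 + c) • v := by
      rw [hv, Matrix.mulVec_smul]
    have e2 : ∀ i, (y - A.mulVec ((1 + c) • xhat)) i = r₀ i - c * v i := by
      intro i
      simp [e1, hr₀]
      ring
    have e3 : lassoObj A y μ ((1 + c) • xhat)
        = (∑ i, ‖r₀ i‖ ^ 2 + (Complex.normSq c * V - 2 * ((starRingEnd ℂ) c * z).re))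
          + μ * (‖1 + c‖ * S) := by
      rw [lassoObj]
      congr 1
      · have : ∀ i, ‖(y - A.mulVec ((1 + c) • xhat)) i‖ ^ 2
            = ‖r₀ i‖ ^ 2 + Complex.normSq c * Complex.normSq (v i)
              - 2 * ((starRingEnd ℂ) c * ((starRingEnd ℂ) (v i) * r₀ i)).re := by
          intro i
          rw [e2 i, Complex.sq_norm, Complex.normSq_sub,
            Complex.sq_norm]
          have : r₀ i * (starRingEnd ℂ) (c * v i)
              = (starRingEnd ℂ) c * ((starRingEnd ℂ) (v i) * r₀ i) := by
            simp only [_root_.map_mul]; ring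
          rw [this, Complex.normSq_mul]
        simp only [this]
        rw [Finset.sum_sub_distrib, Finset.sum_add_distrib, ← Finset.mul_sum, hV]
        have : ∑ i, 2 * ((starRingEnd ℂ) c * ((starRingEnd ℂ) (v i) * r₀ i)).re
            = 2 * ((starRingEnd ℂ) c * z).re := by
          rw [← Finset.mul_sum, ← Complex.re_sum, ← Finset.mul_sum, ← hz]
        rw [this]
        ring
      · have : ∀ i, ‖((1 + c) • xhat) i‖ = ‖1 + c‖ * ‖xhat i‖ := by
          intro i
          simp
        simp only [this]
        rw [← Finset.mul_sum, ← hS]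
    have e4 : lassoObj A y μ xhat = ∑ i, ‖r₀ i‖ ^ 2 + μ * S := by
      rw [lassoObj, ← hr₀, ← hS]
    rw [e3, e4] at h1
    nlinarith [h1]
  -- Step C : directional bounds
  have dir : ∀ w : ℂ, ‖w‖ = 1 → 2 * ((starRingEnd ℂ) w * z).re ≤ μ * S * w.re := by
    intro w hw
    have hw2 : w.re ^ 2 + w.im ^ 2 = 1 := by
      have := Complex.sq_norm w
      rw [hw] at this
      simp [Complex.normSq_apply] at this
      nlinarith [this]
    have hwre : |w.re| ≤ 1 := by
      nlinarith [abs_nonneg w.re, sq_abs w.re, sq_nonneg w.im]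
    apply sub_nonpos.mp
    apply eps_le_aux _ (V + μ * S / 2) (by positivity)
    intro ε hε0 hε1
    have hk := key (ε * w)
    -- bound |1 + ε w| ≤ 1 + ε w.re + ε^2/2
    have habs : ‖1 + ε * w‖ ≤ 1 + ε * w.re + ε ^ 2 / 2 := by
      have hb0 : 0 ≤ 1 + ε * w.re + ε ^ 2 / 2 := by nlinarith [abs_le.mp hwre]
      have hns : Complex.normSq (1 + ε * w) ≤ (1 + ε * w.re + ε ^ 2 / 2) ^ 2 := by
        simp [Complex.normSq_apply, Complex.add_re, Complex.add_im, Complex.mul_re,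
          Complex.mul_im, Complex.ofReal_re, Complex.ofReal_im]
        nlinarith [sq_nonneg (ε * w.re + ε ^ 2 / 2), hw2]
      calc ‖1 + ε * w‖ = Real.sqrt (Complex.normSq (1 + ε * w)) :=
            Complex.norm_def _
        _ ≤ Real.sqrt ((1 + ε * w.re + ε ^ 2 / 2) ^ 2) := Real.sqrt_le_sqrt hns
        _ = 1 + ε * w.re + ε ^ 2 / 2 := Real.sqrt_sq hb0
    have hns2 : Complex.normSq (ε * w) = ε ^ 2 := by
      rw [Complex.normSq_mul]
      have : Complex.normSq w = 1 := by
        rw [← Complex.sq_norm, hw]; norm_num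
      simp [this, Complex.normSq_ofReal]
      ring
    have hre : ((starRingEnd ℂ) ((ε : ℂ) * w) * z).re = ε * ((starRingEnd ℂ) w * z).re :=
      conj_smul_re ε w z
    rw [hns2, hre] at hk
    have hmono : μ * ((‖1 + ε * w‖ - 1) * S)
        ≤ μ * ((ε * w.re + ε ^ 2 / 2) * S) := by
      apply mul_le_mul_of_nonneg_left _ (le_of_lt hμ)
      apply mul_le_mul_of_nonneg_right _ hS0
      linarith [habs]
    nlinarith [hk, hmono]
  -- conclude
  have d1 := dir 1 (by simp)
  have d2 := dir (-1) (by simp)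
  have d3 := dir Complex.I (by simp)
  have d4 := dir (-Complex.I) (by simp)
  simp [Complex.mul_re, Complex.conj_re, Complex.conj_im] at d1 d2 d3 d4
  have him : z.im = 0 := le_antisymm (by linarith) d4
  rw [hLHS]
  simp only [Complex.ext_iff, Complex.mul_re, Complex.mul_im, Complex.ofReal_re,
    Complex.ofReal_im, him]
  norm_num
  linarith
end

section
/- Let A be a complex M×N matrix, Y a complex M×L matrix, and μ ≥ 0. The zero matrix is a global minimizer of the multiple-snapshot objective G(X) = ‖Y − A X‖_F² + μ·Σᵢ ‖Xᵢ·‖₂ if and only if μ ≥ 2·maxᵢ ‖(Aᴴ Y)ᵢ·‖₂, i.e., twice the largest Euclidean row norm of Aᴴ Y. -/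
open Matrix

/-- The multiple-snapshot (mixed-norm) LASSO objective ‖Y − A X‖_F² + μ Σᵢ ‖Xᵢ·‖₂. -/
noncomputable def msObj {M N L : ℕ} (A : Matrix (Fin M) (Fin N) ℂ)
    (Y : Matrix (Fin M) (Fin L) ℂ) (μ : ℝ) (X : Matrix (Fin N) (Fin L) ℂ) : ℝ :=
  (∑ i, ∑ j, ‖(Y - A * X) i j‖ ^ 2) + μ * ∑ i, Real.sqrt (∑ j, ‖X i j‖ ^ 2)

lemma pt_expand (y z : ℂ) : ‖y - z‖^2 = ‖y‖^2 - 2*((starRingEnd ℂ) y * z).re + ‖z‖^2 := by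
  have h1 : ∀ w : ℂ, ‖w‖^2 = Complex.normSq w := fun w => by
    rw [Complex.sq_norm]
  rw [h1, h1, h1, Complex.normSq_sub]
  simp [Complex.mul_re, Complex.conj_re, Complex.conj_im]
  ring

lemma tr_eq {n L : ℕ} (P C : Matrix (Fin n) (Fin L) ℂ) :
    trace (Pᴴ * C) = ∑ i, ∑ j, (starRingEnd ℂ) (P i j) * C i j := by
  simp only [trace, diag, mul_apply, conjTranspose_apply]
  rw [Finset.sum_comm]
  simp [RingHom.coe_comp]

lemma key {M N L : ℕ} (A : Matrix (Fin M) (Fin N) ℂ) (Y : Matrix (Fin M) (Fin L) ℂ)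
    (X : Matrix (Fin N) (Fin L) ℂ) :
    ∑ m, ∑ l, (starRingEnd ℂ) (Y m l) * (A * X) m l
      = ∑ n, ∑ l, (starRingEnd ℂ) ((Aᴴ * Y) n l) * X n l := by
  rw [← tr_eq, ← tr_eq]
  rw [show (Aᴴ * Y)ᴴ = Yᴴ * A by rw [conjTranspose_mul, conjTranspose_conjTranspose],
    Matrix.mul_assoc]

lemma obj_zero {M N L : ℕ} (A : Matrix (Fin M) (Fin N) ℂ)
    (Y : Matrix (Fin M) (Fin L) ℂ) (μ : ℝ) :
    msObj A Y μ 0 = ∑ i, ∑ j, ‖Y i j‖ ^ 2 := by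
  simp [msObj]

lemma fid_expand {M N L : ℕ} (A : Matrix (Fin M) (Fin N) ℂ)
    (Y : Matrix (Fin M) (Fin L) ℂ) (X : Matrix (Fin N) (Fin L) ℂ) :
    ∑ i, ∑ j, ‖(Y - A * X) i j‖ ^ 2
      = (∑ i, ∑ j, ‖Y i j‖ ^ 2)
        - 2 * (∑ n, ∑ l, (starRingEnd ℂ) ((Aᴴ * Y) n l) * X n l).re
        + ∑ i, ∑ j, ‖(A * X) i j‖ ^ 2 := by
  rw [← key]
  have : ∀ i j, ‖(Y - A * X) i j‖ ^ 2
      = ‖Y i j‖^2 - 2*((starRingEnd ℂ) (Y i j) * (A * X) i j).re + ‖(A*X) i j‖^2 := by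
    intro i j
    rw [Matrix.sub_apply, pt_expand]
  simp only [this, Complex.re_sum, Finset.sum_add_distrib, Finset.sum_sub_distrib,
    Finset.mul_sum]

lemma row_cs {L : ℕ} (b x : Fin L → ℂ) :
    (∑ j, (starRingEnd ℂ) (b j) * x j).re
      ≤ Real.sqrt (∑ j, ‖b j‖^2) * Real.sqrt (∑ j, ‖x j‖^2) := by
  have h1 : (∑ j, (starRingEnd ℂ) (b j) * x j).re ≤ ∑ j, ‖b j‖ * ‖x j‖ := by
    refine le_trans (Complex.re_le_norm _) ?_
    refine le_trans (norm_sum_le _ _) ?_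
    refine le_of_eq (Finset.sum_congr rfl fun j _ => ?_)
    rw [norm_mul, RCLike.norm_conj]
  refine h1.trans ?_
  have h2 := Finset.sum_mul_sq_le_sq_mul_sq Finset.univ (fun j => ‖b j‖) (fun j => ‖x j‖)
  have h3 : (0:ℝ) ≤ ∑ j, ‖b j‖ * ‖x j‖ :=
    Finset.sum_nonneg fun j _ => mul_nonneg (norm_nonneg _) (norm_nonneg _)
  calc ∑ j, ‖b j‖ * ‖x j‖ = Real.sqrt ((∑ j, ‖b j‖ * ‖x j‖)^2) := (Real.sqrt_sq h3).symm
    _ ≤ Real.sqrt ((∑ j, ‖b j‖^2) * ∑ j, ‖x j‖^2) := Real.sqrt_le_sqrt h2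
    _ = _ := Real.sqrt_mul (Finset.sum_nonneg fun j _ => sq_nonneg _) _

/-- The zero matrix is a global minimizer of the multiple-snapshot LASSO objective
iff `μ ≥ 2 maxᵢ ‖(Aᴴ Y)ᵢ·‖₂`. -/
theorem ms_zero_minimizer_iff {M N L : ℕ} (A : Matrix (Fin M) (Fin N) ℂ)
    (Y : Matrix (Fin M) (Fin L) ℂ) (μ : ℝ) (hμ : 0 ≤ μ) :
    (∀ X : Matrix (Fin N) (Fin L) ℂ, msObj A Y μ 0 ≤ msObj A Y μ X) ↔
      2 * (⨆ i : Fin N, Real.sqrt (∑ j, ‖(Aᴴ * Y) i j‖ ^ 2)) ≤ μ := by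
  set B := Aᴴ * Y with hB
  set f : Fin N → ℝ := fun i => Real.sqrt (∑ j, ‖B i j‖ ^ 2) with hf
  constructor
  · intro h
    rcases isEmpty_or_nonempty (Fin N) with hN | hN
    · rw [Real.iSup_of_isEmpty]; linarith
    · obtain ⟨i₀, hi₀⟩ := Finite.exists_max f
      suffices h2 : 2 * f i₀ ≤ μ by
        have : (⨆ i, f i) ≤ f i₀ := ciSup_le hi₀
        linarith
      by_contra hcon
      push_neg at hcon
      set Q : ℝ := ∑ j, ‖B i₀ j‖ ^ 2 with hQ
      set s : ℝ := Real.sqrt Q with hs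
      have hQ0 : 0 ≤ Q := Finset.sum_nonneg fun j _ => sq_nonneg _
      have hsq : s ^ 2 = Q := Real.sq_sqrt hQ0
      have hs0 : 0 < s := by
        have : f i₀ = s := rfl
        nlinarith
      set E : Matrix (Fin N) (Fin L) ℂ := fun i j => if i = i₀ then B i₀ j else 0 with hE
      set C : ℝ := ∑ i, ∑ j, ‖(A * E) i j‖ ^ 2 with hC
      have hC0 : 0 ≤ C := Finset.sum_nonneg fun i _ => Finset.sum_nonneg fun j _ => sq_nonneg _
      -- the master inequality for every t ≥ 0
      have master : ∀ t : ℝ, 0 ≤ t → 0 ≤ t^2 * C - 2 * (t * Q) + μ * (t * s) := by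
        intro t ht
        have hkey := h ((t : ℂ) • E)
        rw [obj_zero, msObj, fid_expand] at hkey
        have e1 : ∑ i, ∑ j, ‖(A * ((t:ℂ) • E)) i j‖ ^ 2 = t^2 * C := by
          rw [Matrix.mul_smul]
          simp only [Matrix.smul_apply, norm_smul, Complex.norm_real, Real.norm_eq_abs,
            mul_pow, sq_abs, hC, Finset.mul_sum]
        have e2 : (∑ n, ∑ l, (starRingEnd ℂ) (B n l) * ((t:ℂ) • E) n l).re = t * Q := by
          have inner0 : ∀ n, n ≠ i₀ → ∑ l, (starRingEnd ℂ) (B n l) * ((t:ℂ) • E) n l = 0 := by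
            intro n hn
            refine Finset.sum_eq_zero fun l _ => ?_
            simp only [Matrix.smul_apply]; simp [hE, Matrix.smul_apply, hn]
          rw [Finset.sum_eq_single i₀ (fun n _ hn => inner0 n hn) (by simp)]
          have : ∀ l, (starRingEnd ℂ) (B i₀ l) * ((t:ℂ) • E) i₀ l
              = ((t * ‖B i₀ l‖^2 : ℝ) : ℂ) := by
            intro l
            simp only [Matrix.smul_apply]; simp only [hE, Matrix.smul_apply, smul_eq_mul, eq_self_iff_true, if_true]
            rw [show (starRingEnd ℂ) (B i₀ l) * ((t:ℂ) * B i₀ l)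
                = (t:ℂ) * ((starRingEnd ℂ) (B i₀ l) * B i₀ l) by ring]
            rw [← Complex.normSq_eq_conj_mul_self, Complex.normSq_eq_norm_sq]
            push_cast
            ring
          rw [Finset.sum_congr rfl fun l _ => this l, ← Complex.ofReal_sum]
          rw [Complex.ofReal_re]
          rw [← Finset.mul_sum]
        have e3 : ∑ i, Real.sqrt (∑ j, ‖((t:ℂ) • E) i j‖ ^ 2) = t * s := by
          have inner0 : ∀ n, n ≠ i₀ → Real.sqrt (∑ j, ‖((t:ℂ) • E) n j‖ ^ 2) = 0 := by
            intro n hn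
            have : ∀ j, ((t:ℂ) • E) n j = 0 := by intro j; simp only [Matrix.smul_apply]; simp [hE, Matrix.smul_apply, hn]
            simp [this]
          rw [Finset.sum_eq_single i₀ (fun n _ hn => inner0 n hn) (by simp)]
          have : ∑ j, ‖((t:ℂ) • E) i₀ j‖ ^ 2 = t^2 * Q := by
            simp only [Matrix.smul_apply]; simp only [hE, Matrix.smul_apply, eq_self_iff_true, if_true, norm_smul, Complex.norm_real,
              Real.norm_eq_abs, mul_pow, sq_abs, hQ, Finset.mul_sum]
          rw [this, Real.sqrt_mul (sq_nonneg t), Real.sqrt_sq ht]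
        rw [e1, e2, e3] at hkey
        linarith
      -- choose t and derive a contradiction
      set d : ℝ := 2 * Q - μ * s with hd
      have hd0 : 0 < d := by nlinarith
      set t : ℝ := d / (C + 1) with ht
      have htpos : 0 < t := div_pos hd0 (by linarith)
      have htd : t * (C + 1) = d := div_mul_cancel₀ d (by linarith)
      have := master t htpos.le
      nlinarith
  · intro h X
    rw [obj_zero, msObj, fid_expand]
    have hRe : (∑ n, ∑ l, (starRingEnd ℂ) (B n l) * X n l).re
        ≤ (μ/2) * ∑ i, Real.sqrt (∑ j, ‖X i j‖ ^ 2) := by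
      rw [Complex.re_sum, Finset.mul_sum]
      refine Finset.sum_le_sum fun i _ => ?_
      refine le_trans (row_cs (fun j => B i j) (fun j => X i j)) ?_
      refine mul_le_mul_of_nonneg_right ?_ (Real.sqrt_nonneg _)
      have hsup : f i ≤ ⨆ i, f i :=
        le_ciSup (Set.Finite.bddAbove (Set.finite_range f)) i
      have : f i = Real.sqrt (∑ j, ‖B i j‖ ^ 2) := rfl
      linarith
    have hP : 0 ≤ ∑ i, ∑ j, ‖(A * X) i j‖ ^ 2 :=
      Finset.sum_nonneg fun i _ => Finset.sum_nonneg fun j _ => sq_nonneg _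
    linarith
end
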